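/- For a random vector (X₁,...,X_d) with continuous marginal CDFs F₁,...,F_d and joint CDF H, the function C defined on [0,1]^d by C(u₁,...,u_d) = P(F₁(X₁) ≤ u₁, ..., F_d(X_d) ≤ u_d) satisfies H(x₁,...,x_d) = C(F₁(x₁),...,F_d(x_d)) for all (x₁,...,x_d) ∈ ℝ^d. -/

import Mathlib

open MeasureTheory Set

section Aux

variable {Ω : Type*} [MeasurableSpace Ω] (μ : Measure Ω) [IsProbabilityMeasure μ]
  (Y : Ω → ℝ) (hY : Measurable Y) (G : ℝ → ℝ)
  (hG : ∀ t, G t = (μ {ω | Y ω ≤ t}).toReal) (hGc : Continuous G)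

lemma cdf_mono (hG : ∀ t, G t = (μ {ω | Y ω ≤ t}).toReal) : Monotone G := by
  intro a b hab
  rw [hG, hG]
  exact ENNReal.toReal_le_toReal (measure_ne_top μ _) (measure_ne_top μ _) |>.mpr
    (measure_mono (fun ω h => le_trans h hab))

lemma cdf_flat_null (hY : Measurable Y) (hG : ∀ t, G t = (μ {ω | Y ω ≤ t}).toReal)
    (x t : ℝ) (hxt : x ≤ t) (hGt : G t ≤ G x) :
    μ {ω | x < Y ω ∧ Y ω ≤ t} = 0 := by
  have h1 : μ {ω | Y ω ≤ x} ≤ μ {ω | Y ω ≤ t} :=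
    measure_mono (fun ω h => le_trans h hxt)
  have h2 : μ {ω | Y ω ≤ t} ≤ μ {ω | Y ω ≤ x} := by
    rw [hG, hG] at hGt
    exact (ENNReal.toReal_le_toReal (measure_ne_top μ _) (measure_ne_top μ _)).mp hGt
  have heq : μ {ω | Y ω ≤ t} = μ {ω | Y ω ≤ x} := le_antisymm h2 h1
  have hset : {ω | x < Y ω ∧ Y ω ≤ t} = {ω | Y ω ≤ t} \ {ω | Y ω ≤ x} := by
    ext ω; simp only [Set.mem_setOf_eq, Set.mem_diff, not_le]; tauto
  rw [hset, measure_diff (show {ω | Y ω ≤ x} ⊆ {ω | Y ω ≤ t} from fun ω h => le_trans h hxt)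
    ((hY measurableSet_Iic).nullMeasurableSet) (measure_ne_top μ _), heq, tsub_self]

lemma cdf_no_atoms (hY : Measurable Y) (hG : ∀ t, G t = (μ {ω | Y ω ≤ t}).toReal)
    (hGc : Continuous G) (a : ℝ) : μ {ω | Y ω = a} = 0 := by
  have key : ∀ n : ℕ, (μ {ω | Y ω = a}).toReal ≤ G a - G (a - 1 / (n + 1)) := by
    intro n
    have hsub : {ω | Y ω = a} ⊆ {ω | Y ω ≤ a} \ {ω | Y ω ≤ a - 1 / (n + 1)} := by
      intro ω h
      simp only [Set.mem_setOf_eq] at h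
      have hpos : (0 : ℝ) < 1 / (n + 1) := by positivity
      constructor
      · simp [Set.mem_setOf_eq, h]
      · simp only [Set.mem_setOf_eq, h, not_le]; linarith
    have hle : a - 1 / (n + 1) ≤ a := by
      have hpos : (0 : ℝ) < 1 / (n + 1) := by positivity
      linarith
    calc (μ {ω | Y ω = a}).toReal
        ≤ (μ ({ω | Y ω ≤ a} \ {ω | Y ω ≤ a - 1 / (n + 1)})).toReal := by
          exact ENNReal.toReal_le_toReal (measure_ne_top μ _) (measure_ne_top μ _) |>.mpr
            (measure_mono hsub)
      _ = G a - G (a - 1 / (n + 1)) := by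
          rw [measure_diff
            (show {ω | Y ω ≤ a - 1 / ((n : ℝ) + 1)} ⊆ {ω | Y ω ≤ a} from
              fun ω h => le_trans h hle)
            ((hY measurableSet_Iic).nullMeasurableSet) (measure_ne_top μ _),
            ENNReal.toReal_sub_of_le (measure_mono
              (show {ω | Y ω ≤ a - 1 / ((n : ℝ) + 1)} ⊆ {ω | Y ω ≤ a} from
                fun ω h => le_trans h hle)) (measure_ne_top μ _), hG, hG]
  have hlim : Filter.Tendsto (fun n : ℕ => G a - G (a - 1 / (n + 1))) Filter.atTop
      (nhds 0) := by
    have h1 : Filter.Tendsto (fun n : ℕ => a - 1 / ((n : ℝ) + 1)) Filter.atTop (nhds a) := by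
      have : Filter.Tendsto (fun n : ℕ => 1 / ((n : ℝ) + 1)) Filter.atTop (nhds 0) :=
        tendsto_one_div_add_atTop_nhds_zero_nat
      have h2 : Filter.Tendsto (fun n : ℕ => a - 1 / ((n : ℝ) + 1)) Filter.atTop
          (nhds (a - 0)) := Filter.Tendsto.const_sub a this
      simpa using h2
    have h3 : Filter.Tendsto (fun n : ℕ => G (a - 1 / ((n : ℝ) + 1))) Filter.atTop
        (nhds (G a)) := (hGc.tendsto a).comp h1
    have h4 := Filter.Tendsto.const_sub (G a) h3
    simpa using h4
  have hle0 : (μ {ω | Y ω = a}).toReal ≤ 0 := ge_of_tendsto' hlim key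
  have h0 : (μ {ω | Y ω = a}).toReal = 0 := le_antisymm hle0 ENNReal.toReal_nonneg
  exact (ENNReal.toReal_eq_zero_iff _).mp h0 |>.resolve_right (measure_ne_top μ _)

lemma pit_diff_null (hY : Measurable Y) (hG : ∀ t, G t = (μ {ω | Y ω ≤ t}).toReal)
    (hGc : Continuous G) (x : ℝ) :
    μ ({ω | G (Y ω) ≤ G x} \ {ω | Y ω ≤ x}) = 0 := by
  have hmono : Monotone G := cdf_mono μ Y G hG
  -- rational covering sets
  set T : ℚ → Set Ω := fun q =>
    {ω | x < Y ω ∧ Y ω ≤ (q : ℝ) ∧ G (q : ℝ) ≤ G x} with hT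
  have hTnull : ∀ q : ℚ, μ (T q) = 0 := by
    intro q
    by_cases h : G (q : ℝ) ≤ G x
    · by_cases hxq : x ≤ (q : ℝ)
      · refine measure_mono_null ?_ (cdf_flat_null μ Y G hY hG x q hxq h)
        intro ω hω; exact ⟨hω.1, hω.2.1⟩
      · have : T q = ∅ := by
          ext ω; simp only [hT, Set.mem_setOf_eq, Set.mem_empty_iff_false, iff_false]
          intro ⟨h1, h2, _⟩; exact hxq (le_of_lt (lt_of_lt_of_le h1 h2))
        rw [this]; exact measure_empty
    · have : T q = ∅ := by
        ext ω; simp only [hT, Set.mem_setOf_eq, Set.mem_empty_iff_false, iff_false]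
        intro ⟨_, _, h3⟩; exact h h3
      rw [this]; exact measure_empty
  set S : Set ℝ := {t | G t ≤ G x} with hS
  have hcover : {ω | G (Y ω) ≤ G x} \ {ω | Y ω ≤ x} ⊆
      {ω | Y ω = sSup S} ∪ ⋃ q : ℚ, T q := by
    intro ω hω
    obtain ⟨h1, h2⟩ := hω
    simp only [Set.mem_setOf_eq] at h1 h2
    push_neg at h2
    by_cases hq : ∃ q : ℚ, Y ω ≤ (q : ℝ) ∧ G (q : ℝ) ≤ G x
    · obtain ⟨q, hq1, hq2⟩ := hq
      right
      exact Set.mem_iUnion.mpr ⟨q, ⟨h2, hq1, hq2⟩⟩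
    · left
      push_neg at hq
      -- S is bounded above by Y ω and Y ω ∈ S, hence sSup S = Y ω
      have hbdd : ∀ t ∈ S, t ≤ Y ω := by
        intro t ht
        by_contra hlt
        push_neg at hlt
        obtain ⟨q, hq1, hq2⟩ := exists_rat_btwn hlt
        exact absurd (le_trans (hmono (le_of_lt hq2)) ht) (not_le.mpr (hq q (le_of_lt hq1)))
      have hYS : Y ω ∈ S := h1
      have : sSup S = Y ω :=
        le_antisymm (csSup_le ⟨Y ω, hYS⟩ hbdd) (le_csSup ⟨Y ω, hbdd⟩ hYS)
      simp only [Set.mem_setOf_eq]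
      exact this.symm
  refine measure_mono_null hcover ?_
  refine measure_union_null (cdf_no_atoms μ Y G hY hG hGc _) ?_
  exact measure_iUnion_null hTnull

lemma pit_ae_iff (hY : Measurable Y) (hG : ∀ t, G t = (μ {ω | Y ω ≤ t}).toReal)
    (hGc : Continuous G) (x : ℝ) :
    ∀ᵐ ω ∂μ, (G (Y ω) ≤ G x ↔ Y ω ≤ x) := by
  have hmono : Monotone G := cdf_mono μ Y G hG
  have hnull := pit_diff_null μ Y G hY hG hGc x
  rw [MeasureTheory.ae_iff]
  refine measure_mono_null ?_ hnull
  intro ω hω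
  simp only [Set.mem_setOf_eq] at hω
  have himp : Y ω ≤ x → G (Y ω) ≤ G x := fun h => hmono h
  have h1 : G (Y ω) ≤ G x ∧ ¬ Y ω ≤ x := by tauto
  exact ⟨h1.1, h1.2⟩

end Aux

/-- Sklar's theorem (existence, continuous margins): the joint CDF `H` factors through
the copula `C` of the probability-integral-transformed vector. -/
theorem sklar_existence_continuous_margins
    {Ω : Type*} [MeasurableSpace Ω] (μ : Measure Ω) [IsProbabilityMeasure μ]
    (d : ℕ) (X : Ω → Fin d → ℝ) (hX : Measurable X)
    (F : Fin d → ℝ → ℝ) (hF : ∀ i x, F i x = (μ {ω | X ω i ≤ x}).toReal)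
    (hFcont : ∀ i, Continuous (F i))
    (H : (Fin d → ℝ) → ℝ) (hH : ∀ x, H x = (μ {ω | ∀ i, X ω i ≤ x i}).toReal)
    (C : (Fin d → ℝ) → ℝ)
    (hC : ∀ u, C u = (μ {ω | ∀ i, F i (X ω i) ≤ u i}).toReal) :
    ∀ x : Fin d → ℝ, H x = C (fun i => F i (x i)) := by
  intro x
  rw [hH, hC]
  congr 1
  have hXi : ∀ i : Fin d, Measurable (fun ω => X ω i) :=
    fun i => (measurable_pi_apply i).comp hX
  have hiff : ∀ᵐ ω ∂μ, ∀ i : Fin d,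
      (F i (X ω i) ≤ F i (x i) ↔ X ω i ≤ x i) := by
    rw [MeasureTheory.ae_all_iff]
    intro i
    exact pit_ae_iff μ (fun ω => X ω i) (F i) (hXi i) (hF i) (hFcont i) (x i)
  apply measure_congr
  rw [Filter.eventuallyEq_set]
  filter_upwards [hiff] with ω hω
  constructor
  · intro h i; exact (hω i).mpr (h i)
  · intro h i; exact (hω i).mp (h i)
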